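/- Let G be an n-resource selection game and let s be a Nash equilibrium of G such that for every j ∈ {1,…,n}, the equilibrium cost h_j^s is not a plateau height of f_j. Then every Nash equilibrium of G is a super-strong Nash equilibrium. -/

import Mathlib

open scoped NNReal

namespace RSG

/-- A consumption profile in an `n`-resource selection game: each nonempty type
`R ⊆ [n]` distributes its mass `μ R` among the resources in `R`. -/
def IsProfile (n : ℕ) (μ : Finset (Fin n) → ℝ≥0) (s : Finset (Fin n) → Fin n → ℝ≥0) : Prop :=
  (∀ R : Finset (Fin n), ∀ j : Fin n, j ∉ R → s R j = 0) ∧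
  (∀ R : Finset (Fin n), R.Nonempty → ∑ j ∈ R, s R j = μ R)

/-- The load on resource `j` in profile `s`. -/
def load (n : ℕ) (s : Finset (Fin n) → Fin n → ℝ≥0) (j : Fin n) : ℝ≥0 :=
  ∑ R : Finset (Fin n), s R j

/-- The cost of resource `j` in profile `s`. -/
def cost (n : ℕ) (f : Fin n → ℝ≥0 → ℝ) (s : Finset (Fin n) → Fin n → ℝ≥0) (j : Fin n) : ℝ :=
  f j (load n s j)

/-- A Nash equilibrium. -/
def IsNash (n : ℕ) (f : Fin n → ℝ≥0 → ℝ) (μ : Finset (Fin n) → ℝ≥0)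
    (s : Finset (Fin n) → Fin n → ℝ≥0) : Prop :=
  IsProfile n μ s ∧
  ∀ R : Finset (Fin n), ∀ k ∈ R, 0 < s R k → ∀ j ∈ R, cost n f s k ≤ cost n f s j

/-- A strong Nash equilibrium: a Nash equilibrium `s` such that there is no
consumption profile `s' ≠ s` in which every player who strictly increases its
consumption of some resource `k` (i.e. `s' R k > s R k`) pays, at `k` in `s'`,
strictly less than the common equilibrium cost `h^R` of its type
(expressed via: less than `cost s j` for every `j` in the support of `s R`). -/
def IsStrong (n : ℕ) (f : Fin n → ℝ≥0 → ℝ) (μ : Finset (Fin n) → ℝ≥0)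
    (s : Finset (Fin n) → Fin n → ℝ≥0) : Prop :=
  IsNash n f μ s ∧
  ¬ ∃ s' : Finset (Fin n) → Fin n → ℝ≥0, IsProfile n μ s' ∧ s' ≠ s ∧
    ∀ R : Finset (Fin n), ∀ k : Fin n, s R k < s' R k →
      ∀ j : Fin n, 0 < s R j → cost n f s' k < cost n f s j

end RSG

open RSG

/-- `h` is a plateau height of `f` if `f` attains the value `h` at two distinct points. -/
def IsPlateauHeight (f : ℝ≥0 → ℝ) (h : ℝ) : Prop :=
  ∃ x y : ℝ≥0, x ≠ y ∧ f x = h ∧ f y = h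

/-- A super-strong Nash equilibrium: a Nash equilibrium `s` such that there is
no consumption profile `s'` in which every player who strictly increases its
consumption of some resource `k` pays at `k` in `s'` at most the equilibrium
cost `h^R` of its type, while at least one pair of a type `R` and a resource
`k` in the support of `s' R` pays strictly less than `h^R`. -/
def IsSuperStrong (n : ℕ) (f : Fin n → ℝ≥0 → ℝ) (μ : Finset (Fin n) → ℝ≥0)
    (s : Finset (Fin n) → Fin n → ℝ≥0) : Prop :=
  RSG.IsNash n f μ s ∧
  ¬ ∃ s' : Finset (Fin n) → Fin n → ℝ≥0, RSG.IsProfile n μ s' ∧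
    (∀ R : Finset (Fin n), ∀ k : Fin n, s R k < s' R k →
      ∀ j : Fin n, 0 < s R j → RSG.cost n f s' k ≤ RSG.cost n f s j) ∧
    (∃ R : Finset (Fin n), ∃ k : Fin n, 0 < s' R k ∧
      ∀ j : Fin n, 0 < s R j → RSG.cost n f s' k < RSG.cost n f s j)

section Aux

variable {n : ℕ} {f : Fin n → ℝ≥0 → ℝ} {μ : Finset (Fin n) → ℝ≥0}

lemma sum_univ_eq {s : Finset (Fin n) → Fin n → ℝ≥0}
    (hs : IsProfile n μ s) (R : Finset (Fin n)) :
    ∑ j : Fin n, s R j = if R.Nonempty then μ R else 0 := by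
  have h1 : ∑ j : Fin n, s R j = ∑ j ∈ R, s R j :=
    (Finset.sum_subset (Finset.subset_univ R) (fun x _ hx => hs.1 R x hx)).symm
  split_ifs with h
  · rw [h1, hs.2 R h]
  · rw [Finset.not_nonempty_iff_eq_empty] at h
    subst h; simpa using h1

lemma total_load_eq {s s' : Finset (Fin n) → Fin n → ℝ≥0}
    (hs : IsProfile n μ s) (hs' : IsProfile n μ s') :
    ∑ j : Fin n, load n s j = ∑ j : Fin n, load n s' j := by
  unfold load
  rw [Finset.sum_comm (s := Finset.univ) (t := Finset.univ) (f := fun j R => s R j),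
    Finset.sum_comm (s := Finset.univ) (t := Finset.univ) (f := fun j R => s' R j)]
  exact Finset.sum_congr rfl fun R _ => by
    rw [sum_univ_eq hs R, sum_univ_eq hs' R]

lemma all_zero_of_mu_zero {s : Finset (Fin n) → Fin n → ℝ≥0}
    (hs : IsProfile n μ s) (R : Finset (Fin n)) (hR : R.Nonempty) (hμ : μ R = 0) :
    ∀ j, s R j = 0 := by
  intro j
  by_cases hj : j ∈ R
  · have h := hs.2 R hR
    rw [hμ] at h
    exact (Finset.sum_eq_zero_iff.mp h) j hj
  · exact hs.1 R j hj

lemma exists_support {s : Finset (Fin n) → Fin n → ℝ≥0}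
    (hs : IsProfile n μ s) (R : Finset (Fin n)) (hR : R.Nonempty) (hμ : μ R ≠ 0) :
    ∃ j0 ∈ R, s R j0 ≠ 0 := by
  by_contra hc; push_neg at hc
  exact hμ ((hs.2 R hR).symm.trans (Finset.sum_eq_zero hc))

lemma type_le {s s' : Finset (Fin n) → Fin n → ℝ≥0}
    (hs : IsNash n f μ s) (hs' : IsProfile n μ s') (R : Finset (Fin n)) :
    ∑ j : Fin n, (s R j : ℝ) * cost n f s j ≤ ∑ j : Fin n, (s' R j : ℝ) * cost n f s j := by
  by_cases hR : R.Nonempty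
  · by_cases hμ : μ R = 0
    · have h1 := all_zero_of_mu_zero hs.1 R hR hμ
      have h2 := all_zero_of_mu_zero hs' R hR hμ
      simp [h1, h2]
    · obtain ⟨k0, hk0R, hk0⟩ := exists_support hs.1 R hR hμ
      have hmin : ∀ j ∈ R, cost n f s k0 ≤ cost n f s j :=
        hs.2 R k0 hk0R (pos_iff_ne_zero.mpr hk0)
      have hsum : ∑ j : Fin n, (s R j : ℝ) = (μ R : ℝ) := by
        have := sum_univ_eq hs.1 R
        rw [if_pos hR] at this
        exact_mod_cast congrArg NNReal.toReal this
      have hsum' : ∑ j : Fin n, (s' R j : ℝ) = (μ R : ℝ) := by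
        have := sum_univ_eq hs' R
        rw [if_pos hR] at this
        exact_mod_cast congrArg NNReal.toReal this
      have heq1 : ∑ j : Fin n, (s R j : ℝ) * cost n f s j
          = (μ R : ℝ) * cost n f s k0 := by
        rw [show ∑ j : Fin n, (s R j : ℝ) * cost n f s j
            = ∑ j : Fin n, (s R j : ℝ) * cost n f s k0 from
          Finset.sum_congr rfl fun j _ => by
            rcases eq_or_ne (s R j) 0 with h | h
            · simp [h]
            · have hjR : j ∈ R := by
                by_contra hj; exact h (hs.1.1 R j hj)
              rw [le_antisymm (hs.2 R j hjR (pos_iff_ne_zero.mpr h) k0 hk0R) (hmin j hjR)]]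
        rw [← Finset.sum_mul, hsum]
      rw [heq1]
      calc (μ R : ℝ) * cost n f s k0
          = ∑ j : Fin n, (s' R j : ℝ) * cost n f s k0 := by
            rw [← Finset.sum_mul, hsum']
        _ ≤ ∑ j : Fin n, (s' R j : ℝ) * cost n f s j := by
            refine Finset.sum_le_sum fun j _ => ?_
            rcases eq_or_ne (s' R j) 0 with h | h
            · simp [h]
            · have hjR : j ∈ R := by
                by_contra hj; exact h (hs'.1 R j hj)
              exact mul_le_mul_of_nonneg_left (hmin j hjR) (s' R j).coe_nonneg
  · rw [Finset.not_nonempty_iff_eq_empty] at hR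
    subst hR
    have h1 : ∀ j, s ∅ j = 0 := fun j => hs.1.1 ∅ j (by simp)
    have h2 : ∀ j, s' ∅ j = 0 := fun j => hs'.1 ∅ j (by simp)
    simp [h1, h2]

lemma var_le {s s' : Finset (Fin n) → Fin n → ℝ≥0}
    (hs : IsNash n f μ s) (hs' : IsProfile n μ s') :
    ∑ j : Fin n, (load n s j : ℝ) * cost n f s j
      ≤ ∑ j : Fin n, (load n s' j : ℝ) * cost n f s j := by
  have key : ∀ t : Finset (Fin n) → Fin n → ℝ≥0,
      ∑ j : Fin n, (load n t j : ℝ) * cost n f s j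
        = ∑ R : Finset (Fin n), ∑ j : Fin n, (t R j : ℝ) * cost n f s j := by
    intro t
    simp only [load, NNReal.coe_sum, Finset.sum_mul]
    exact Finset.sum_comm
  rw [key s, key s']
  exact Finset.sum_le_sum fun R _ => type_le hs hs' R

lemma loads_eq (hmono : ∀ j, Monotone (f j))
    {s₀ : Finset (Fin n) → Fin n → ℝ≥0} (hs₀ : IsNash n f μ s₀)
    (hplateau : ∀ j : Fin n, ¬ IsPlateauHeight (f j) (cost n f s₀ j))
    {s : Finset (Fin n) → Fin n → ℝ≥0} (hs : IsNash n f μ s) :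
    ∀ j, load n s j = load n s₀ j := by
  have h1 := var_le hs hs₀.1
  have h2 := var_le hs₀ hs.1
  have hnn : ∀ j ∈ (Finset.univ : Finset (Fin n)),
      0 ≤ (cost n f s j - cost n f s₀ j) * ((load n s j : ℝ) - (load n s₀ j : ℝ)) := by
    intro j _
    rcases le_total (load n s₀ j) (load n s j) with h | h
    · have : cost n f s₀ j ≤ cost n f s j := hmono j h
      have h' : (load n s₀ j : ℝ) ≤ (load n s j : ℝ) := by exact_mod_cast h
      nlinarith
    · have : cost n f s j ≤ cost n f s₀ j := hmono j h
      have h' : (load n s j : ℝ) ≤ (load n s₀ j : ℝ) := by exact_mod_cast h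
      nlinarith
  have hsum : ∑ j : Fin n,
      (cost n f s j - cost n f s₀ j) * ((load n s j : ℝ) - (load n s₀ j : ℝ)) ≤ 0 := by
    have expand : ∑ j : Fin n,
        (cost n f s j - cost n f s₀ j) * ((load n s j : ℝ) - (load n s₀ j : ℝ))
        = (∑ j : Fin n, (load n s j : ℝ) * cost n f s j
            - ∑ j : Fin n, (load n s₀ j : ℝ) * cost n f s j)
          + (∑ j : Fin n, (load n s₀ j : ℝ) * cost n f s₀ j
            - ∑ j : Fin n, (load n s j : ℝ) * cost n f s₀ j) := by
      rw [← Finset.sum_sub_distrib, ← Finset.sum_sub_distrib, ← Finset.sum_add_distrib]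
      exact Finset.sum_congr rfl fun j _ => by ring
    rw [expand]; linarith
  have hzero := (Finset.sum_eq_zero_iff_of_nonneg hnn).mp
    (le_antisymm hsum (Finset.sum_nonneg hnn))
  intro j
  by_contra hne
  have hj := hzero j (Finset.mem_univ j)
  have hℓne : (load n s j : ℝ) - (load n s₀ j : ℝ) ≠ 0 := by
    intro h
    exact hne (NNReal.coe_injective (by linarith [sub_eq_zero.mp h]))
  have hc : cost n f s j = cost n f s₀ j := by
    rcases mul_eq_zero.mp hj with h | h
    · linarith [sub_eq_zero.mp h]
    · exact absurd h hℓne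
  exact hplateau j ⟨load n s j, load n s₀ j, hne, hc, rfl⟩

end Aux

/-- If in some Nash equilibrium `s₀` the cost of each resource
`j` is not a plateau height of `f j`, then every Nash equilibrium of the game
is super-strong. -/
theorem nash_is_super_strong (n : ℕ) (f : Fin n → ℝ≥0 → ℝ)
    (μ : Finset (Fin n) → ℝ≥0) (hmono : ∀ j, Monotone (f j))
    (s₀ : Finset (Fin n) → Fin n → ℝ≥0) (hs₀ : IsNash n f μ s₀)
    (hplateau : ∀ j : Fin n, ¬ IsPlateauHeight (f j) (cost n f s₀ j)) :
    ∀ s : Finset (Fin n) → Fin n → ℝ≥0, IsNash n f μ s → IsSuperStrong n f μ s := by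
  intro s hs
  refine ⟨hs, ?_⟩
  rintro ⟨s', hs'prof, hA, R₁, k₁, hk₁pos, hB⟩
  have hload := loads_eq hmono hs₀ hplateau hs
  have hP : ∀ j, ¬ IsPlateauHeight (f j) (cost n f s j) := by
    intro j
    rw [show cost n f s j = cost n f s₀ j from by unfold cost; rw [hload j]]
    exact hplateau j
  have hle : ∀ k, load n s' k ≤ load n s k := by
    intro k
    by_contra hlt
    push_neg at hlt
    obtain ⟨R, hR⟩ : ∃ R, s R k < s' R k := by
      by_contra hc; push_neg at hc
      exact not_lt.mpr (Finset.sum_le_sum fun R _ => hc R) hlt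
    have hkR : k ∈ R := by
      by_contra hk
      rw [hs'prof.1 R k hk] at hR
      exact (not_lt.2 zero_le) hR
    have hR_ne : R.Nonempty := ⟨k, hkR⟩
    have hμpos : μ R ≠ 0 := by
      intro h0
      have h := all_zero_of_mu_zero hs'prof R hR_ne h0 k
      rw [h] at hR
      exact (not_lt.2 zero_le) hR
    obtain ⟨j0, hj0R, hj0⟩ := exists_support hs.1 R hR_ne hμpos
    have h1 : cost n f s' k ≤ cost n f s j0 := hA R k hR j0 (pos_iff_ne_zero.mpr hj0)
    have h2 : cost n f s j0 ≤ cost n f s k := hs.2 R j0 hj0R (pos_iff_ne_zero.mpr hj0) k hkR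
    have h3 : cost n f s k ≤ cost n f s' k := hmono k (le_of_lt hlt)
    have heq : f k (load n s k) = f k (load n s' k) := le_antisymm h3 (h1.trans h2)
    exact hP k ⟨load n s' k, load n s k, (ne_of_lt hlt).symm, heq.symm, rfl⟩
  have hsums := total_load_eq hs'prof hs.1
  have hleq : ∀ k, load n s' k = load n s k := fun k =>
    (Finset.sum_eq_sum_iff_of_le (fun k _ => hle k)).mp hsums k (Finset.mem_univ k)
  have hk₁R : k₁ ∈ R₁ := by
    by_contra h
    rw [hs'prof.1 R₁ k₁ h] at hk₁pos
    exact lt_irrefl 0 hk₁pos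
  have hR₁ne : R₁.Nonempty := ⟨k₁, hk₁R⟩
  have hμ₁ : μ R₁ ≠ 0 := by
    intro h0
    have h := all_zero_of_mu_zero hs'prof R₁ hR₁ne h0 k₁
    rw [h] at hk₁pos
    exact lt_irrefl 0 hk₁pos
  obtain ⟨j0, hj0R, hj0⟩ := exists_support hs.1 R₁ hR₁ne hμ₁
  have h1 : cost n f s' k₁ < cost n f s j0 := hB j0 (pos_iff_ne_zero.mpr hj0)
  have h2 : cost n f s j0 ≤ cost n f s k₁ := hs.2 R₁ j0 hj0R (pos_iff_ne_zero.mpr hj0) k₁ hk₁R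
  have h3 : cost n f s k₁ = cost n f s' k₁ := by unfold cost; rw [hleq k₁]
  linarith
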